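/- Let m ∈ ℕ, N ∈ ℕ, p ∈ (0,1], and let Z ~ Bin(N, p). Then E[1/((Z+1)(Z+2)⋯(Z+m))] = (1/((N+1)(N+2)⋯(N+m) p^m)) · Σ_{r=0}^{N} C(N+m, r+m) p^{r+m} (1−p)^{N−r}, and in particular E[1/((Z+1)⋯(Z+m))] ≤ 1/((N+1)^m p^m). -/

import Mathlib

open scoped BigOperators

lemma key_nat (m N r : ℕ) :
    N.choose r * ∏ j ∈ Finset.range m, (N + 1 + j)
      = (N + m).choose (r + m) * ∏ j ∈ Finset.range m, (r + 1 + j) := by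
  induction m with
  | zero => simp
  | succ m ih =>
    rw [Finset.prod_range_succ, Finset.prod_range_succ, ← mul_assoc, ih,
      show N + (m + 1) = N + m + 1 by ring, show r + (m + 1) = r + m + 1 by ring]
    have h : (N + 1 + m) * (N + m).choose (r + m)
        = (N + m + 1).choose (r + m + 1) * (r + m + 1) := by
      rw [show N + 1 + m = (N + m) + 1 by ring]
      exact Nat.add_one_mul_choose_eq (N + m) (r + m)
    have hz := congrArg (fun n : ℕ => (n : ℤ)) h
    push_cast at hz
    zify
    linear_combination (∏ j ∈ Finset.range m, ((r : ℤ) + 1 + (j : ℤ))) * hz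

theorem statement4 (m N : ℕ) (p : ℝ) (hp0 : 0 < p) (hp1 : p ≤ 1) :
    (∑ r ∈ Finset.range (N + 1),
        (N.choose r : ℝ) * p ^ r * (1 - p) ^ (N - r) /
          ∏ j ∈ Finset.range m, ((r : ℝ) + 1 + (j : ℝ))
      = 1 / ((∏ j ∈ Finset.range m, ((N : ℝ) + 1 + (j : ℝ))) * p ^ m) *
          ∑ r ∈ Finset.range (N + 1),
            ((N + m).choose (r + m) : ℝ) * p ^ (r + m) * (1 - p) ^ (N - r)) ∧
    ∑ r ∈ Finset.range (N + 1),
        (N.choose r : ℝ) * p ^ r * (1 - p) ^ (N - r) /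
          ∏ j ∈ Finset.range m, ((r : ℝ) + 1 + (j : ℝ))
      ≤ 1 / (((N : ℝ) + 1) ^ m * p ^ m) := by
  have hq : (0:ℝ) ≤ 1 - p := by linarith
  set PN : ℝ := ∏ j ∈ Finset.range m, ((N : ℝ) + 1 + (j : ℝ)) with hPN
  have hPNpos : 0 < PN := Finset.prod_pos (fun j _ => by positivity)
  have hterm : ∀ r ∈ Finset.range (N+1),
      (N.choose r : ℝ) * p ^ r * (1 - p) ^ (N - r) /
          ∏ j ∈ Finset.range m, ((r : ℝ) + 1 + (j : ℝ))
        = 1 / (PN * p ^ m) *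
            (((N + m).choose (r + m) : ℝ) * p ^ (r + m) * (1 - p) ^ (N - r)) := by
    intro r _
    have hPr : (0:ℝ) < ∏ j ∈ Finset.range m, ((r : ℝ) + 1 + (j : ℝ)) :=
      Finset.prod_pos (fun j _ => by positivity)
    have hk' := congrArg (fun n : ℕ => (n : ℝ)) (key_nat m N r)
    push_cast at hk'
    rw [pow_add]
    field_simp
    rw [← hPN] at hk'
    linear_combination ((1 - p) ^ (N - r)) * hk'
  have heq : ∑ r ∈ Finset.range (N + 1),
        (N.choose r : ℝ) * p ^ r * (1 - p) ^ (N - r) /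
          ∏ j ∈ Finset.range m, ((r : ℝ) + 1 + (j : ℝ))
      = 1 / (PN * p ^ m) *
          ∑ r ∈ Finset.range (N + 1),
            ((N + m).choose (r + m) : ℝ) * p ^ (r + m) * (1 - p) ^ (N - r) := by
    rw [Finset.mul_sum]
    exact Finset.sum_congr rfl hterm
  refine ⟨heq, ?_⟩
  rw [heq]
  set S : ℝ := ∑ r ∈ Finset.range (N + 1),
      ((N + m).choose (r + m) : ℝ) * p ^ (r + m) * (1 - p) ^ (N - r) with hS
  have hSnn : 0 ≤ S := Finset.sum_nonneg fun r _ => by positivity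
  have hS1 : S ≤ 1 := by
    have hmap : S = ∑ k ∈ (Finset.range (N + 1)).map (addRightEmbedding m),
        ((N + m).choose k : ℝ) * p ^ k * (1 - p) ^ (N + m - k) := by
      rw [Finset.sum_map]
      refine Finset.sum_congr rfl fun r _ => ?_
      simp only [addRightEmbedding_apply]
      rw [Nat.add_sub_add_right]
    have hsub : (Finset.range (N + 1)).map (addRightEmbedding m) ⊆ Finset.range (N + m + 1) := by
      intro k hk
      simp only [Finset.mem_map, Finset.mem_range, addRightEmbedding_apply] at hk ⊢
      obtain ⟨r, hr, rfl⟩ := hk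
      omega
    calc S ≤ ∑ k ∈ Finset.range (N + m + 1),
          ((N + m).choose k : ℝ) * p ^ k * (1 - p) ^ (N + m - k) := by
            rw [hmap]
            exact Finset.sum_le_sum_of_subset_of_nonneg hsub fun k _ _ => by positivity
      _ = (p + (1 - p)) ^ (N + m) := by
            rw [add_pow]
            exact Finset.sum_congr rfl fun k _ => by ring
      _ = 1 := by norm_num
  have hprod : ((N : ℝ) + 1) ^ m ≤ PN := by
    have hc : ((N : ℝ) + 1) ^ m = ∏ _j ∈ Finset.range m, ((N : ℝ) + 1) := by
      rw [Finset.prod_const, Finset.card_range]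
    rw [hc, hPN]
    exact Finset.prod_le_prod (fun j _ => by positivity) (fun j _ => by
      have : (0:ℝ) ≤ (j:ℝ) := by positivity
      linarith)
  calc 1 / (PN * p ^ m) * S ≤ 1 / (PN * p ^ m) * 1 := by
        have : 0 < PN * p ^ m := by positivity
        exact mul_le_mul_of_nonneg_left hS1 (by positivity)
    _ = 1 / (PN * p ^ m) := mul_one _
    _ ≤ 1 / (((N : ℝ) + 1) ^ m * p ^ m) := by
        gcongr
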